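/- Let p be a prime, n a positive integer, and let A ∈ M_{k_1×(n−k_1)}(Z), B ∈ M_{k_2×(n−k_1)}(Z). Let C_1 be the code of length n over Z_p generated by the rows of [I_{k_1} | A], and C_2 the code over Z_p generated by the rows of the block matrix with rows [I_{k_1} | A] and [0 | B], and assume dim C_1 = k_1 and dim C_2 = k_1 + k_2. If C is a code of length n over Z_{p^2} satisfying π(C) = C_1 and ι^{-1}(C) = C_2, then there exists a matrix N ∈ M_{k_1×(n−k_1)}(Z) such that C is generated over Z_{p^2} by the rows of the block matrix with rows [I_{k_1} | A + pN] and [0 | pB]. Moreover, if k_2 = 0 (i.e., π(C) = ι^{-1}(C) = C_1), then such a matrix N is unique modulo p. -/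

import Mathlib

open scoped BigOperators

namespace Paper

/-- Self-orthogonality of a set of vectors w.r.t. the standard inner product. -/
def sorth {m : ℕ} {ι : Type} [Fintype ι] (S : Set (ι → ZMod m)) : Prop :=
  ∀ x ∈ S, ∀ y ∈ S, ∑ i, x i * y i = 0

/-- The dual (as a set) of a set of vectors w.r.t. the standard inner product. -/
def dualSet {m : ℕ} {ι : Type} [Fintype ι] (S : Set (ι → ZMod m)) : Set (ι → ZMod m) :=
  {x | ∀ y ∈ S, ∑ i, x i * y i = 0}

/-- A set of vectors is doubly even if every element has Hamming weight divisible by 4. -/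
def doublyEven {m : ℕ} {ι : Type} [Fintype ι] (S : Set (ι → ZMod m)) : Prop :=
  ∀ x ∈ S, 4 ∣ (Finset.univ.filter fun i => x i ≠ 0).card

/-- Coordinatewise reduction map `(Z_{p^2})^ι → (Z_p)^ι`. -/
def res (p : ℕ) [Fact p.Prime] {ι : Type} (v : ι → ZMod (p ^ 2)) : ι → ZMod p :=
  fun i => ZMod.castHom (dvd_pow_self p (by norm_num)) (ZMod p) (v i)

/-- The injection `(Z_p)^ι → (Z_{p^2})^ι` induced by `Z_p ≅ pZ_{p^2} ⊆ Z_{p^2}`. -/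
def iot (p : ℕ) {ι : Type} (v : ι → ZMod p) : ι → ZMod (p ^ 2) :=
  fun i => (p : ZMod (p ^ 2)) * (ZMod.cast (v i))

/-- Coordinatewise reduction map `(Z_4)^ι → (Z_2)^ι`. -/
def res4 {ι : Type} (v : ι → ZMod 4) : ι → ZMod 2 :=
  fun i => ZMod.castHom (by norm_num : (2:ℕ) ∣ 4) (ZMod 2) (v i)

/-- The injection `(Z_2)^ι → (Z_4)^ι`. -/
def iot4 {ι : Type} (v : ι → ZMod 2) : ι → ZMod 4 :=
  fun i => (2 : ZMod 4) * (ZMod.cast (v i))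

/-- Euclidean weight on `Z_4`. -/
def ewt (x : ZMod 4) : ℕ := if x = 0 then 0 else if x = 2 then 4 else 1

/-- A quaternary code is even if every codeword has Euclidean weight divisible by 8. -/
def evenCode {ι : Type} [Fintype ι] (S : Set (ι → ZMod 4)) : Prop :=
  ∀ x ∈ S, 8 ∣ ∑ i, ewt (x i)

/-- The code over `Z_q` generated by the rows of an integer matrix. -/
def intRowSpan (q : ℕ) {κ ι : Type} (G : Matrix κ ι ℤ) :
    Submodule (ZMod q) (ι → ZMod q) :=
  Submodule.span (ZMod q) (Set.range fun i => fun c => ((G i c : ℤ) : ZMod q))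

/-- The Gaussian binomial coefficient `[n choose k]_p`. -/
def gauss (p n k : ℕ) : ℚ :=
  ∏ i ∈ Finset.range k, ((p : ℚ) ^ n - (p : ℚ) ^ i) / ((p : ℚ) ^ k - (p : ℚ) ^ i)

/-- The code over `Z_{p^2}` with generator matrix `[[I, A + pN], [0, pB]]`. -/
def genSO (p k1 k2 r : ℕ) (A : Matrix (Fin k1) (Fin r) ℤ) (B : Matrix (Fin k2) (Fin r) ℤ)
    (N : Matrix (Fin k1) (Fin r) ℤ) :
    Submodule (ZMod (p ^ 2)) ((Fin k1 ⊕ Fin r) → ZMod (p ^ 2)) :=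
  intRowSpan (p ^ 2) (Matrix.fromRows
    (Matrix.fromCols (1 : Matrix (Fin k1) (Fin k1) ℤ) (A + (p : ℤ) • N))
    (Matrix.fromCols (0 : Matrix (Fin k2) (Fin k1) ℤ) ((p : ℤ) • B)))

section Aux

variable (p : ℕ) [Fact p.Prime]

lemma key_int {x y : ℤ} (h : (x : ZMod p) = (y : ZMod p)) :
    ((p * x : ℤ) : ZMod (p ^ 2)) = ((p * y : ℤ) : ZMod (p ^ 2)) := by
  have hd : (p : ℤ) ∣ x - y := by
    rwa [← ZMod.intCast_zmod_eq_zero_iff_dvd, Int.cast_sub, sub_eq_zero]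
  obtain ⟨t, ht⟩ := hd
  rw [← sub_eq_zero, ← Int.cast_sub, ZMod.intCast_zmod_eq_zero_iff_dvd]
  refine ⟨t, ?_⟩
  push_cast
  rw [show (p : ℤ) * x - p * y = (p : ℤ) * (x - y) by ring, ht]
  ring

lemma val_int_cast_back (a : ZMod p) : (((a.val : ℤ)) : ZMod p) = a := by
  push_cast [ZMod.natCast_val, ZMod.cast_id]
  rfl

lemma cast_val_int (a : ZMod p) :
    (ZMod.cast a : ZMod (p ^ 2)) = (((a.val : ℤ)) : ZMod (p ^ 2)) := by
  rw [← ZMod.natCast_val]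
  push_cast
  ring

lemma iot_coord {a : ZMod p} {t : ℤ} (ht : (t : ZMod p) = a) :
    (p : ZMod (p ^ 2)) * ZMod.cast a = ((p * t : ℤ) : ZMod (p ^ 2)) := by
  rw [cast_val_int]
  have h2 := key_int p (x := (a.val : ℤ)) (y := t)
    (by rw [ht, val_int_cast_back])
  rw [← h2]; push_cast; ring

lemma iot_apply_val {ι : Type} (v : ι → ZMod p) (c : ι) :
    iot p v c = ((p * ((v c).val : ℤ) : ℤ) : ZMod (p ^ 2)) :=
  iot_coord p (val_int_cast_back p _)

lemma iot_zero {ι : Type} : iot p (0 : ι → ZMod p) = 0 := by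
  funext c
  show (p : ZMod (p ^ 2)) * ZMod.cast (0 : ZMod p) = 0
  rw [iot_coord p (t := 0) (by push_cast; ring)]
  push_cast; ring

lemma iot_add {ι : Type} (v w : ι → ZMod p) :
    iot p (v + w) = iot p v + iot p w := by
  funext c
  show (p : ZMod (p ^ 2)) * ZMod.cast (v c + w c) = iot p v c + iot p w c
  rw [iot_coord p (t := ((v c).val : ℤ) + ((w c).val : ℤ))
      (by push_cast [ZMod.natCast_val, ZMod.cast_id]; ring),
    iot_apply_val, iot_apply_val]
  push_cast; ring

/-- `iot` as an additive monoid hom. -/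
def iotAdd {ι : Type} : (ι → ZMod p) →+ (ι → ZMod (p ^ 2)) :=
  { toFun := iot p, map_zero' := iot_zero p, map_add' := iot_add p }

lemma iot_sub {ι : Type} (v w : ι → ZMod p) :
    iot p (v - w) = iot p v - iot p w :=
  map_sub (iotAdd p) v w

lemma iot_smul {ι : Type} (s : ZMod p) (v : ι → ZMod p) :
    iot p (s • v) = ((s.val : ℤ) : ZMod (p ^ 2)) • iot p v := by
  funext c
  show (p : ZMod (p ^ 2)) * ZMod.cast (s * v c) = _
  rw [iot_coord p (t := (s.val : ℤ) * ((v c).val : ℤ))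
      (by push_cast [ZMod.natCast_val, ZMod.cast_id]; ring)]
  show _ = ((s.val : ℤ) : ZMod (p ^ 2)) * iot p v c
  rw [iot_apply_val]
  push_cast; ring

lemma res_intCast {ι : Type} (f : ι → ℤ) :
    res p (fun c => ((f c : ℤ) : ZMod (p ^ 2))) = fun c => ((f c : ℤ) : ZMod p) := by
  funext c
  simp [res, map_intCast]

lemma res_iot {ι : Type} (w : ι → ZMod p) : res p (iot p w) = 0 := by
  funext c
  have h : iot p w c = ((p * ((w c).val : ℤ) : ℤ) : ZMod (p ^ 2)) := iot_apply_val p w c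
  show ZMod.castHom _ (ZMod p) (iot p w c) = 0
  rw [h, map_intCast]
  push_cast
  simp

lemma res_sub {ι : Type} (x y : ι → ZMod (p ^ 2)) :
    res p (x - y) = res p x - res p y := by
  funext c
  show ZMod.castHom _ (ZMod p) (x c - y c) =
    ZMod.castHom _ (ZMod p) (x c) - ZMod.castHom _ (ZMod p) (y c)
  exact map_sub _ _ _

lemma eq_iot_of_res_zero {ι : Type} {x : ι → ZMod (p ^ 2)} (h : res p x = 0) :
    ∃ w : ι → ZMod p, x = iot p w := by
  refine ⟨fun c => (((x c).val / p : ℕ) : ZMod p), ?_⟩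
  funext c
  have hc : ((x c).val : ZMod p) = 0 := by
    have := congrFun h c
    simpa [res, ZMod.castHom_apply, ← ZMod.natCast_val, ZMod.natCast_val] using this
  obtain ⟨t, ht⟩ := (ZMod.natCast_eq_zero_iff _ p).mp hc
  have h2 : ((x c).val / p : ℕ) = t := by
    rw [ht]; exact Nat.mul_div_cancel_left t (Fact.out : p.Prime).pos
  show x c = (p : ZMod (p ^ 2)) * ZMod.cast _
  rw [iot_coord p (t := (t : ℤ)) (by simp [h2])]
  have h3 : ((p : ℤ) * t) = ((x c).val : ℤ) := by rw [ht]; push_cast; ring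
  rw [h3]
  push_cast [ZMod.natCast_val, ZMod.cast_id]
  rfl

end Aux

section Main

variable (p : ℕ) [Fact p.Prime]

/-- Rows of an integer matrix, cast into `ZMod q`. -/
def rowp (q : ℕ) {κ ι : Type} (G : Matrix κ ι ℤ) : κ → ι → ZMod q :=
  fun i c => ((G i c : ℤ) : ZMod q)

lemma mem_intRowSpan_iff {q : ℕ} {κ ι : Type} [Fintype κ] {G : Matrix κ ι ℤ}
    {x : ι → ZMod q} :
    x ∈ intRowSpan q G ↔ ∃ c : κ → ZMod q, ∑ i, c i • rowp q G i = x :=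
  Submodule.mem_span_range_iff_exists_fun _

lemma rowp_mem {q : ℕ} {κ ι : Type} (G : Matrix κ ι ℤ) (i : κ) :
    rowp q G i ∈ intRowSpan q G :=
  Submodule.subset_span ⟨i, rfl⟩

/-- `res` as an additive monoid hom. -/
def resAdd {ι : Type} : (ι → ZMod (p ^ 2)) →+ (ι → ZMod p) where
  toFun := res p
  map_zero' := by funext c; simp [res]
  map_add' := fun x y => by
    funext c
    show ZMod.castHom _ (ZMod p) (x c + y c) = _
    rw [map_add]; rfl

lemma res_smul_int {ι : Type} (t : ℤ) (v : ι → ZMod (p ^ 2)) :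
    res p (((t : ℤ) : ZMod (p ^ 2)) • v) = ((t : ℤ) : ZMod p) • res p v := by
  funext c
  show ZMod.castHom _ (ZMod p) (((t : ℤ) : ZMod (p ^ 2)) * v c) = _
  rw [map_mul, map_intCast]
  rfl

lemma res_sum {ι κ : Type} [Fintype κ] (f : κ → ι → ZMod (p ^ 2)) :
    res p (∑ i, f i) = ∑ i, res p (f i) :=
  map_sum (resAdd p) f Finset.univ

lemma iot_sum {ι κ : Type} [Fintype κ] (f : κ → ι → ZMod p) :
    iot p (∑ i, f i) = ∑ i, iot p (f i) :=
  map_sum (iotAdd p) f Finset.univ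

end Main

section Exist

variable (p : ℕ) [Fact p.Prime]

lemma exists_N {k1 k2 r : ℕ}
    (A : Matrix (Fin k1) (Fin r) ℤ) (B : Matrix (Fin k2) (Fin r) ℤ)
    (C : Submodule (ZMod (p ^ 2)) ((Fin k1 ⊕ Fin r) → ZMod (p ^ 2)))
    (hres : res p '' (C : Set ((Fin k1 ⊕ Fin r) → ZMod (p ^ 2))) =
      (intRowSpan p (Matrix.fromCols (1 : Matrix (Fin k1) (Fin k1) ℤ) A) :
        Set ((Fin k1 ⊕ Fin r) → ZMod p)))
    (htor : iot p ⁻¹' (C : Set ((Fin k1 ⊕ Fin r) → ZMod (p ^ 2))) =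
      (intRowSpan p (Matrix.fromRows
        (Matrix.fromCols (1 : Matrix (Fin k1) (Fin k1) ℤ) A)
        (Matrix.fromCols (0 : Matrix (Fin k2) (Fin k1) ℤ) B)) :
        Set ((Fin k1 ⊕ Fin r) → ZMod p))) :
    ∃ N : Matrix (Fin k1) (Fin r) ℤ, C = genSO p k1 k2 r A B N := by
  classical
  set G1 : Matrix (Fin k1) (Fin k1 ⊕ Fin r) ℤ :=
    Matrix.fromCols (1 : Matrix (Fin k1) (Fin k1) ℤ) A with hG1
  set G2 : Matrix (Fin k1 ⊕ Fin k2) (Fin k1 ⊕ Fin r) ℤ :=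
    Matrix.fromRows G1 (Matrix.fromCols (0 : Matrix (Fin k2) (Fin k1) ℤ) B) with hG2
  -- membership transfer for the torsion code
  have htmem : ∀ v : (Fin k1 ⊕ Fin r) → ZMod p, v ∈ intRowSpan p G2 → iot p v ∈ C := by
    intro v hv
    have : v ∈ iot p ⁻¹' (C : Set ((Fin k1 ⊕ Fin r) → ZMod (p ^ 2))) := by
      rw [htor]; exact hv
    exact this
  -- choose lifts of the rows of [I | A]
  have hrow1 : ∀ i : Fin k1, ∃ x, x ∈ C ∧ res p x = rowp p G1 i := by
    intro i
    have hmem : rowp p G1 i ∈ (intRowSpan p G1 : Set ((Fin k1 ⊕ Fin r) → ZMod p)) :=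
      rowp_mem G1 i
    rw [← hres] at hmem
    obtain ⟨x, hx, hxe⟩ := hmem
    exact ⟨x, hx, hxe⟩
  choose cvec hcmem hcres using hrow1
  have hressub : ∀ i, res p (cvec i - rowp (p ^ 2) G1 i) = 0 := by
    intro i
    rw [res_sub, hcres]
    have h2 : res p (rowp (p ^ 2) G1 i) = rowp p G1 i := res_intCast p (fun c => G1 i c)
    rw [h2, sub_self]
  have hd : ∀ i, ∃ wv, cvec i - rowp (p ^ 2) G1 i = iot p wv :=
    fun i => eq_iot_of_res_zero p (hressub i)
  choose w hw using hd
  have hcvec : ∀ i, cvec i = rowp (p ^ 2) G1 i + iot p (w i) := by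
    intro i
    have := hw i
    linear_combination (norm := module) this
  -- the torsion correction
  set t : Fin k1 → (Fin k1 ⊕ Fin r) → ZMod p :=
    fun i => ∑ j, (w i (Sum.inl j)) • rowp p G1 j with ht
  have ht2 : ∀ i, t i ∈ intRowSpan p G2 := by
    intro i
    refine Submodule.sum_mem _ fun j _ => Submodule.smul_mem _ _ ?_
    have : rowp p G1 j = rowp p G2 (Sum.inl j) := by
      funext c; simp [rowp, hG2, Matrix.fromRows_apply_inl]
    rw [this]; exact rowp_mem G2 (Sum.inl j)
  have hrowp_inl : ∀ (j' : Fin k1) (j : Fin k1),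
      rowp p G1 j' (Sum.inl j) = if j' = j then 1 else 0 := by
    intro j' j
    simp [rowp, hG1, Matrix.fromCols_apply_inl, Matrix.one_apply]
  have hw'inl : ∀ i j, (w i - t i) (Sum.inl j) = 0 := by
    intro i j
    have htval : t i (Sum.inl j) = w i (Sum.inl j) := by
      rw [ht]
      simp only [Finset.sum_apply, Pi.smul_apply, smul_eq_mul]
      rw [Finset.sum_eq_single j]
      · rw [hrowp_inl]; simp
      · intro b _ hb; rw [hrowp_inl]; simp [hb]
      · intro hj; exact absurd (Finset.mem_univ j) hj
    simp [htval]
  -- define N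
  set N : Matrix (Fin k1) (Fin r) ℤ :=
    Matrix.of (fun i j => (((w i - t i) (Sum.inr j)).val : ℤ)) with hN
  set M : Matrix (Fin k1 ⊕ Fin k2) (Fin k1 ⊕ Fin r) ℤ :=
    Matrix.fromRows
      (Matrix.fromCols (1 : Matrix (Fin k1) (Fin k1) ℤ) (A + (p : ℤ) • N))
      (Matrix.fromCols (0 : Matrix (Fin k2) (Fin k1) ℤ) ((p : ℤ) • B)) with hM
  have hgen : genSO p k1 k2 r A B N = intRowSpan (p ^ 2) M := rfl
  -- key identity E1
  have E1 : ∀ i, rowp (p ^ 2) M (Sum.inl i) = cvec i - iot p (t i) := by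
    intro i
    rw [hcvec i]
    have hstep : rowp (p ^ 2) G1 i + iot p (w i) - iot p (t i)
        = rowp (p ^ 2) G1 i + iot p (w i - t i) := by
      rw [iot_sub]; abel
    rw [hstep]
    funext ct
    cases ct with
    | inl j =>
        have hz : iot p (w i - t i) (Sum.inl j) = 0 := by
          rw [iot_apply_val, hw'inl]
          simp
        show ((M (Sum.inl i) (Sum.inl j) : ℤ) : ZMod (p ^ 2)) = _
        rw [Pi.add_apply, hz, add_zero]
        show _ = ((G1 i (Sum.inl j) : ℤ) : ZMod (p ^ 2))
        rw [hM, hG1]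
        simp
    | inr j =>
        have hz : iot p (w i - t i) (Sum.inr j) =
            ((p * N i j : ℤ) : ZMod (p ^ 2)) := by
          show (p : ZMod (p ^ 2)) * ZMod.cast ((w i - t i) (Sum.inr j)) = _
          exact iot_coord p (by rw [hN]; exact val_int_cast_back p _)
        show ((M (Sum.inl i) (Sum.inr j) : ℤ) : ZMod (p ^ 2)) = _
        rw [Pi.add_apply, hz]
        show _ = ((G1 i (Sum.inr j) : ℤ) : ZMod (p ^ 2)) + ((p * N i j : ℤ) : ZMod (p ^ 2))
        rw [hM, hG1]
        simp only [Matrix.fromRows_apply_inl, Matrix.fromCols_apply_inr,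
          Matrix.add_apply, Matrix.smul_apply, smul_eq_mul]
        push_cast
        ring
  -- key identity E2
  have E2 : ∀ j : Fin k2, rowp (p ^ 2) M (Sum.inr j) = iot p (rowp p G2 (Sum.inr j)) := by
    intro j
    funext ct
    show ((M (Sum.inr j) ct : ℤ) : ZMod (p ^ 2))
      = (p : ZMod (p ^ 2)) * ZMod.cast (rowp p G2 (Sum.inr j) ct)
    rw [iot_coord p (a := rowp p G2 (Sum.inr j) ct) (t := G2 (Sum.inr j) ct) rfl]
    cases ct with
    | inl j' =>
        rw [hM, hG2]
        simp
    | inr j' =>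
        rw [hM, hG2]
        simp only [Matrix.fromRows_apply_inr, Matrix.fromCols_apply_inr,
          Matrix.smul_apply, smul_eq_mul]
  -- key identity E3
  have E3 : ∀ i : Fin k1, iot p (rowp p G2 (Sum.inl i)) =
      ((p : ℤ) : ZMod (p ^ 2)) • rowp (p ^ 2) M (Sum.inl i) := by
    intro i
    funext ct
    show (p : ZMod (p ^ 2)) * ZMod.cast (rowp p G2 (Sum.inl i) ct)
      = ((p : ℤ) : ZMod (p ^ 2)) * ((M (Sum.inl i) ct : ℤ) : ZMod (p ^ 2))
    rw [iot_coord p (a := rowp p G2 (Sum.inl i) ct) (t := G2 (Sum.inl i) ct) rfl]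
    have hr : ((p : ℤ) : ZMod (p ^ 2)) * ((M (Sum.inl i) ct : ℤ) : ZMod (p ^ 2))
        = ((p * M (Sum.inl i) ct : ℤ) : ZMod (p ^ 2)) := by push_cast; ring
    rw [hr]
    apply key_int
    cases ct with
    | inl j =>
        rw [hG2, hM, hG1]
        simp
    | inr j =>
        rw [hG2, hM, hG1]
        simp only [Matrix.fromRows_apply_inl, Matrix.fromCols_apply_inr,
          Matrix.add_apply, Matrix.smul_apply, smul_eq_mul]
        push_cast
        simp
  refine ⟨N, le_antisymm ?_ ?_⟩
  · -- C ≤ genSO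
    intro x hx
    have hresx : res p x ∈ intRowSpan p G1 := by
      have hmem : res p x ∈ res p '' (C : Set ((Fin k1 ⊕ Fin r) → ZMod (p ^ 2))) :=
        ⟨x, hx, rfl⟩
      rw [hres] at hmem
      exact hmem
    obtain ⟨a, ha⟩ := mem_intRowSpan_iff.mp hresx
    set y : (Fin k1 ⊕ Fin r) → ZMod (p ^ 2) :=
      ∑ i, (((a i).val : ℤ) : ZMod (p ^ 2)) • rowp (p ^ 2) M (Sum.inl i) with hy
    have hyC : y ∈ C := by
      rw [hy]
      refine Submodule.sum_mem _ fun i _ => Submodule.smul_mem _ _ ?_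
      rw [E1 i]
      exact sub_mem (hcmem i) (htmem _ (ht2 i))
    have hyG : y ∈ intRowSpan (p ^ 2) M := by
      rw [hy]
      exact Submodule.sum_mem _ fun i _ => Submodule.smul_mem _ _ (rowp_mem M (Sum.inl i))
    have hresrow : ∀ i, res p (rowp (p ^ 2) M (Sum.inl i)) = rowp p G1 i := by
      intro i
      have h0 : res p (rowp (p ^ 2) M (Sum.inl i))
          = fun c => ((M (Sum.inl i) c : ℤ) : ZMod p) :=
        res_intCast p (fun c => M (Sum.inl i) c)
      rw [h0]
      funext c
      show ((M (Sum.inl i) c : ℤ) : ZMod p) = ((G1 i c : ℤ) : ZMod p)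
      cases c with
      | inl j =>
          rw [hM, hG1]
          simp
      | inr j =>
          rw [hM, hG1]
          simp only [Matrix.fromRows_apply_inl, Matrix.fromCols_apply_inr,
            Matrix.add_apply, Matrix.smul_apply, smul_eq_mul]
          push_cast
          simp
    have hresy : res p y = res p x := by
      rw [← ha, hy]
      have hsum : res p (∑ i, (((a i).val : ℤ) : ZMod (p ^ 2)) • rowp (p ^ 2) M (Sum.inl i))
          = ∑ i, res p ((((a i).val : ℤ) : ZMod (p ^ 2)) • rowp (p ^ 2) M (Sum.inl i)) :=
        res_sum p _
      rw [hsum]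
      refine Finset.sum_congr rfl fun i _ => ?_
      rw [res_smul_int, hresrow i, val_int_cast_back]
    have hz0 : res p (x - y) = 0 := by rw [res_sub, hresy, sub_self]
    obtain ⟨u, hu⟩ := eq_iot_of_res_zero p hz0
    have huC2 : u ∈ intRowSpan p G2 := by
      have h1 : iot p u ∈ C := by rw [← hu]; exact sub_mem hx hyC
      have h2 : u ∈ iot p ⁻¹' (C : Set ((Fin k1 ⊕ Fin r) → ZMod (p ^ 2))) := h1
      rw [htor] at h2
      exact h2
    obtain ⟨b, hb⟩ := mem_intRowSpan_iff.mp huC2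
    have hiotu : iot p u ∈ intRowSpan (p ^ 2) M := by
      rw [← hb, iot_sum p (fun s => b s • rowp p G2 s)]
      refine Submodule.sum_mem _ fun s _ => ?_
      rw [iot_smul]
      refine Submodule.smul_mem _ _ ?_
      cases s with
      | inl i =>
          rw [E3 i]
          exact Submodule.smul_mem _ _ (rowp_mem M (Sum.inl i))
      | inr j =>
          rw [← E2 j]
          exact rowp_mem M (Sum.inr j)
    have hxeq : x = iot p u + y := by rw [← hu]; abel
    rw [hgen, hxeq]
    exact Submodule.add_mem _ hiotu hyG
  · -- genSO ≤ C
    rw [hgen]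
    apply Submodule.span_le.mpr
    rintro x ⟨s, rfl⟩
    show rowp (p ^ 2) M s ∈ C
    cases s with
    | inl i =>
        rw [E1]
        exact sub_mem (hcmem i) (htmem _ (ht2 i))
    | inr j =>
        rw [E2]
        exact htmem _ (rowp_mem G2 (Sum.inr j))

end Exist

section Uniq

variable (p : ℕ) [Fact p.Prime]

lemma unique_N {k1 r : ℕ} (A : Matrix (Fin k1) (Fin r) ℤ)
    (B : Matrix (Fin 0) (Fin r) ℤ) (N1 N2 : Matrix (Fin k1) (Fin r) ℤ)
    (h : genSO p k1 0 r A B N1 = genSO p k1 0 r A B N2) :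
    ∀ i j, ((N1 i j : ℤ) : ZMod p) = ((N2 i j : ℤ) : ZMod p) := by
  intro i j
  set M1 : Matrix (Fin k1 ⊕ Fin 0) (Fin k1 ⊕ Fin r) ℤ :=
    Matrix.fromRows
      (Matrix.fromCols (1 : Matrix (Fin k1) (Fin k1) ℤ) (A + (p : ℤ) • N1))
      (Matrix.fromCols (0 : Matrix (Fin 0) (Fin k1) ℤ) ((p : ℤ) • B)) with hM1
  set M2 : Matrix (Fin k1 ⊕ Fin 0) (Fin k1 ⊕ Fin r) ℤ :=
    Matrix.fromRows
      (Matrix.fromCols (1 : Matrix (Fin k1) (Fin k1) ℤ) (A + (p : ℤ) • N2))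
      (Matrix.fromCols (0 : Matrix (Fin 0) (Fin k1) ℤ) ((p : ℤ) • B)) with hM2
  have hmem : rowp (p ^ 2) M1 (Sum.inl i) ∈ intRowSpan (p ^ 2) M2 := by
    have h1 : rowp (p ^ 2) M1 (Sum.inl i) ∈ genSO p k1 0 r A B N1 :=
      rowp_mem M1 (Sum.inl i)
    rwa [h] at h1
  obtain ⟨c, hc⟩ := mem_intRowSpan_iff.mp hmem
  -- evaluate at a left coordinate to compute the coefficients
  have hcoeff : ∀ j0 : Fin k1, c (Sum.inl j0) = if i = j0 then 1 else 0 := by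
    intro j0
    have h1 := congrFun hc (Sum.inl j0)
    simp only [Finset.sum_apply, Pi.smul_apply, smul_eq_mul, Fintype.sum_sum_type,
      Finset.univ_eq_empty, Finset.sum_empty, add_zero] at h1
    have hrow : ∀ j' : Fin k1, rowp (p ^ 2) M2 (Sum.inl j') (Sum.inl j0)
        = if j' = j0 then 1 else 0 := by
      intro j'
      rw [hM2]
      simp [rowp, Matrix.one_apply]
    rw [Finset.sum_congr rfl (fun j' _ => by rw [hrow j'])] at h1
    have hlhs : rowp (p ^ 2) M1 (Sum.inl i) (Sum.inl j0) = if i = j0 then 1 else 0 := by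
      rw [hM1]; simp [rowp, Matrix.one_apply]
    rw [hlhs] at h1
    rw [← h1]
    rw [Finset.sum_eq_single j0]
    · simp
    · intro b _ hb; simp [hb]
    · intro hj; exact absurd (Finset.mem_univ j0) hj
  -- evaluate at the right coordinate
  have h2 := congrFun hc (Sum.inr j)
  simp only [Finset.sum_apply, Pi.smul_apply, smul_eq_mul, Fintype.sum_sum_type,
    Finset.univ_eq_empty, Finset.sum_empty, add_zero] at h2
  rw [Finset.sum_congr rfl (fun j' _ => by rw [hcoeff j'])] at h2
  rw [Finset.sum_eq_single i] at h2
  · rw [if_pos rfl, one_mul] at h2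
    have hM2v : rowp (p ^ 2) M2 (Sum.inl i) (Sum.inr j)
        = ((A i j + p * N2 i j : ℤ) : ZMod (p ^ 2)) := by
      rw [hM2]
      simp [rowp, Matrix.add_apply, Matrix.smul_apply]
    have hM1v : rowp (p ^ 2) M1 (Sum.inl i) (Sum.inr j)
        = ((A i j + p * N1 i j : ℤ) : ZMod (p ^ 2)) := by
      rw [hM1]
      simp [rowp, Matrix.add_apply, Matrix.smul_apply]
    rw [hM2v, hM1v] at h2
    have h3 : ((p * (N2 i j - N1 i j) : ℤ) : ZMod (p ^ 2)) = 0 := by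
      rw [← sub_eq_zero] at h2
      rw [← h2]
      push_cast
      ring
    have h4 : ((p : ℤ) : ℤ) * ((p : ℤ)) ∣ (p : ℤ) * (N2 i j - N1 i j) := by
      have := (ZMod.intCast_zmod_eq_zero_iff_dvd _ (p ^ 2)).mp h3
      have hp2 : ((p ^ 2 : ℕ) : ℤ) = (p : ℤ) * (p : ℤ) := by push_cast; ring
      rwa [hp2] at this
    have hp0 : (p : ℤ) ≠ 0 := by
      exact_mod_cast (Fact.out : p.Prime).ne_zero
    have h5 : (p : ℤ) ∣ (N2 i j - N1 i j) := by
      obtain ⟨q, hq⟩ := h4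
      refine ⟨q, ?_⟩
      apply mul_left_cancel₀ hp0
      rw [hq]; ring
    rw [← sub_eq_zero, ← Int.cast_sub, ZMod.intCast_zmod_eq_zero_iff_dvd]
    exact dvd_sub_comm.mp h5
  · intro b _ hb; simp [Ne.symm hb]
  · intro hj; exact absurd (Finset.mem_univ i) hj

end Uniq

/-- if `π(C) = C₁` (generated by `[I | A]`) and `ι⁻¹(C) = C₂` (generated by
`[[I, A], [0, B]]`), then `C` is generated by `[[I, A + pN], [0, pB]]` for some integer matrix
`N`; if moreover `k₂ = 0`, such `N` is unique modulo `p`. -/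
theorem stmt4 (p : ℕ) [Fact p.Prime] (n k1 k2 r : ℕ) (hn : 0 < n) (hnr : n = k1 + r)
    (A : Matrix (Fin k1) (Fin r) ℤ) (B : Matrix (Fin k2) (Fin r) ℤ)
    (hdim1 : Module.finrank (ZMod p)
      (intRowSpan p (Matrix.fromCols (1 : Matrix (Fin k1) (Fin k1) ℤ) A)) = k1)
    (hdim2 : Module.finrank (ZMod p)
      (intRowSpan p (Matrix.fromRows
        (Matrix.fromCols (1 : Matrix (Fin k1) (Fin k1) ℤ) A)
        (Matrix.fromCols (0 : Matrix (Fin k2) (Fin k1) ℤ) B))) = k1 + k2)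
    (C : Submodule (ZMod (p ^ 2)) ((Fin k1 ⊕ Fin r) → ZMod (p ^ 2)))
    (hres : res p '' (C : Set ((Fin k1 ⊕ Fin r) → ZMod (p ^ 2))) =
      (intRowSpan p (Matrix.fromCols (1 : Matrix (Fin k1) (Fin k1) ℤ) A) :
        Set ((Fin k1 ⊕ Fin r) → ZMod p)))
    (htor : iot p ⁻¹' (C : Set ((Fin k1 ⊕ Fin r) → ZMod (p ^ 2))) =
      (intRowSpan p (Matrix.fromRows
        (Matrix.fromCols (1 : Matrix (Fin k1) (Fin k1) ℤ) A)
        (Matrix.fromCols (0 : Matrix (Fin k2) (Fin k1) ℤ) B)) :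
        Set ((Fin k1 ⊕ Fin r) → ZMod p))) :
    (∃ N : Matrix (Fin k1) (Fin r) ℤ, C = genSO p k1 k2 r A B N) ∧
    (k2 = 0 → ∀ N1 N2 : Matrix (Fin k1) (Fin r) ℤ,
      C = genSO p k1 k2 r A B N1 → C = genSO p k1 k2 r A B N2 →
      ∀ i j, ((N1 i j : ℤ) : ZMod p) = ((N2 i j : ℤ) : ZMod p)) := by
  constructor
  · exact exists_N p A B C hres htor
  · intro hk2 N1 N2 h1 h2 i j
    subst hk2
    exact unique_N p A B N1 N2 (h1.symm.trans h2) i j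

end Paper
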